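/- Let κ(x) = ⌊log x / log 2⌋ and L(x) = Σ_{k=2}^{κ(x)} (log² x)/(8π k² x^{1/3 - 1/(2k)}) for x ≥ 4. Then for every integer j ≥ 35 and every real x ≥ 2^j, L(x) ≤ L(2^j). -/

import Mathlib

set_option maxHeartbeats 1000000

/-- `κ(x) = ⌊log x / log 2⌋`, the largest integer `k` with `x^(1/k) ≥ 2`. -/
noncomputable def kappa (x : ℝ) : ℕ := ⌊Real.log x / Real.log 2⌋₊

/-- `L(x) = ∑_{k=2}^{κ(x)} (log² x)/(8π k² x^(1/3 - 1/(2k)))`. -/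
noncomputable def L (x : ℝ) : ℝ :=
  ∑ k ∈ Finset.Icc 2 (kappa x),
    (Real.log x) ^ 2 / (8 * Real.pi * (k : ℝ) ^ 2 * x ^ ((1 : ℝ) / 3 - 1 / (2 * k)))

noncomputable def fterm (k : ℕ) (x : ℝ) : ℝ :=
  (Real.log x) ^ 2 / (8 * Real.pi * (k : ℝ) ^ 2 * x ^ ((1 : ℝ) / 3 - 1 / (2 * (k:ℝ))))

lemma L_eq (x : ℝ) : L x = ∑ k ∈ Finset.Icc 2 (kappa x), fterm k x := rfl

lemma kappa_pow (m : ℕ) : kappa ((2:ℝ)^m) = m := by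
  unfold kappa
  rw [Real.log_pow]
  rw [mul_div_assoc, div_self (ne_of_gt (Real.log_pos one_lt_two)), mul_one]
  simp

lemma le_kappa {j : ℕ} {x : ℝ} (hx : (2:ℝ)^j ≤ x) : j ≤ kappa x := by
  have hx0 : (0:ℝ) < x := lt_of_lt_of_le (by positivity) hx
  apply Nat.le_floor
  rw [le_div_iff₀ (Real.log_pos one_lt_two)]
  have : Real.log ((2:ℝ)^j) ≤ Real.log x := Real.log_le_log (by positivity) hx
  rwa [Real.log_pow] at this

lemma pow_kappa_le {x : ℝ} (hx : (4:ℝ) ≤ x) : (2:ℝ) ^ (kappa x) ≤ x := by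
  have hx0 : (0:ℝ) < x := by linarith
  have hlogx : 0 ≤ Real.log x := Real.log_nonneg (by linarith)
  have h1 : ((kappa x : ℝ)) * Real.log 2 ≤ Real.log x := by
    have h := Nat.floor_le (R := ℝ) (a := Real.log x / Real.log 2)
      (div_nonneg hlogx (Real.log_nonneg one_le_two))
    rw [le_div_iff₀ (Real.log_pos one_lt_two)] at h
    exact h
  have h2 : Real.log ((2:ℝ) ^ kappa x) ≤ Real.log x := by rwa [Real.log_pow]
  calc (2:ℝ) ^ kappa x = Real.exp (Real.log ((2:ℝ) ^ kappa x)) :=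
        (Real.exp_log (by positivity)).symm
    _ ≤ Real.exp (Real.log x) := Real.exp_le_exp.2 h2
    _ = x := Real.exp_log hx0

lemma core (α : ℝ) (hα : 0 < α) {a b : ℝ} (ha : 1 < a) (hab : a ≤ b)
    (h2 : 2 ≤ α * Real.log a) :
    (Real.log b)^2 / b ^ α ≤ (Real.log a)^2 / a ^ α := by
  have ha0 : (0:ℝ) < a := by linarith
  have hb0 : (0:ℝ) < b := lt_of_lt_of_le ha0 hab
  set A := Real.log a with hA
  set s := Real.log (b / a) with hs
  have hApos : 0 < A := Real.log_pos ha
  have hspos : 0 ≤ s := Real.log_nonneg (by rw [le_div_iff₀ ha0]; linarith)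
  have hlogb : Real.log b = A + s := by
    rw [hs, Real.log_div (by positivity) (by positivity)]; ring
  have hba : (b / a) ^ α = Real.exp (s * α) :=
    Real.rpow_def_of_pos (by positivity) α
  have hbpow : b ^ α = a ^ α * Real.exp (s * α) := by
    rw [← hba, ← Real.mul_rpow ha0.le (by positivity)]
    congr 1
    field_simp
  have hexp : (1 + s * α / 2)^2 ≤ Real.exp (s * α) := by
    have h1 : 1 + s * α / 2 ≤ Real.exp (s * α / 2) := by
      have := Real.add_one_le_exp (s * α / 2); linarith
    have h2' : (1 + s * α / 2)^2 ≤ (Real.exp (s * α / 2))^2 :=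
      pow_le_pow_left₀ (by positivity) h1 2
    refine h2'.trans_eq ?_
    rw [sq, ← Real.exp_add]
    ring_nf
  rw [hlogb, div_le_div_iff₀ (by positivity) (by positivity), hbpow]
  have key : (A + s)^2 ≤ A^2 * Real.exp (s * α) := by
    have h3 : A^2 * (1 + s * α / 2)^2 ≤ A^2 * Real.exp (s * α) :=
      mul_le_mul_of_nonneg_left hexp (by positivity)
    refine le_trans ?_ h3
    nlinarith [mul_nonneg hspos (sub_nonneg.2 h2), sq_nonneg s,
      mul_nonneg (mul_nonneg hspos hspos) (sub_nonneg.2 h2), sq_nonneg (A*α - 2)]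
  calc (A + s)^2 * a^α ≤ (A^2 * Real.exp (s*α)) * a^α :=
        mul_le_mul_of_nonneg_right key (by positivity)
    _ = A^2 * (a^α * Real.exp (s*α)) := by ring

lemma alpha_bound {k : ℕ} (hk : 2 ≤ k) :
    (1:ℝ)/12 ≤ (1 : ℝ) / 3 - 1 / (2 * (k:ℝ)) := by
  have hk' : (2:ℝ) ≤ (k:ℝ) := by exact_mod_cast hk
  have h : 1 / (2 * (k:ℝ)) ≤ 1/4 := by
    rw [div_le_div_iff₀ (by linarith) (by norm_num)]
    linarith
  linarith

lemma fterm_anti {k : ℕ} (hk : 2 ≤ k) {a b : ℝ} (ha : (2:ℝ)^(35:ℕ) ≤ a)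
    (hab : a ≤ b) : fterm k b ≤ fterm k a := by
  have h235 : (10:ℝ) ≤ (2:ℝ)^(35:ℕ) := by norm_num
  have ha1 : (1:ℝ) < a := by linarith
  have hαb : (1:ℝ)/12 ≤ (1 : ℝ) / 3 - 1 / (2 * (k:ℝ)) := alpha_bound hk
  have hα0 : 0 < (1 : ℝ) / 3 - 1 / (2 * (k:ℝ)) := by linarith
  have hloga : (24:ℝ) ≤ Real.log a := by
    have h1 : (0.6931471803:ℝ) < Real.log 2 := Real.log_two_gt_d9
    have h2 : Real.log ((2:ℝ)^(35:ℕ)) ≤ Real.log a := Real.log_le_log (by positivity) ha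
    rw [Real.log_pow] at h2
    push_cast at h2
    nlinarith
  have h2 : 2 ≤ ((1 : ℝ) / 3 - 1 / (2 * (k:ℝ))) * Real.log a := by
    nlinarith [mul_le_mul hαb hloga (by norm_num) hα0.le]
  have hcore := core _ hα0 ha1 hab h2
  have hk0 : (0:ℝ) < (k:ℝ) := by
    have : (2:ℝ) ≤ (k:ℝ) := by exact_mod_cast hk
    linarith
  have hC : (0:ℝ) < 8 * Real.pi * (k:ℝ)^2 := by positivity
  have e : ∀ x : ℝ, fterm k x =
      ((Real.log x)^2 / x ^ ((1 : ℝ) / 3 - 1 / (2 * (k:ℝ)))) / (8 * Real.pi * (k:ℝ)^2) := by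
    intro x
    unfold fterm
    rw [div_div, mul_comm]
  rw [e a, e b]
  gcongr

lemma fterm_pow (k n : ℕ) : fterm k ((2:ℝ)^n) =
    ((n:ℝ)^2 * (Real.log 2)^2) /
      (8 * Real.pi * (k:ℝ)^2 * (2:ℝ) ^ ((n:ℝ) * ((1:ℝ)/3 - 1/(2*(k:ℝ))))) := by
  unfold fterm
  rw [Real.log_pow, ← Real.rpow_natCast 2 n, ← Real.rpow_mul (by norm_num : (0:ℝ) ≤ 2)]
  rw [mul_pow]

lemma twelfth_root : (1.059:ℝ) ≤ (2:ℝ) ^ ((1:ℝ)/12) := by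
  have h : ((1.059:ℝ)) ^ (12:ℕ) ≤ 2 := by norm_num
  have h2 : (1.059:ℝ) ≤ (2:ℝ) ^ (((12:ℝ))⁻¹) := by
    rw [← Real.rpow_natCast (1.059:ℝ) 12] at h
    calc (1.059:ℝ) = ((1.059:ℝ) ^ ((12:ℝ))) ^ ((12:ℝ)⁻¹) := by
          rw [← Real.rpow_mul (by norm_num), mul_inv_cancel₀ (by norm_num), Real.rpow_one]
      _ ≤ (2:ℝ) ^ ((12:ℝ)⁻¹) := by
          apply Real.rpow_le_rpow (by positivity) ?_ (by norm_num)
          exact_mod_cast h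
  calc (1.059:ℝ) ≤ (2:ℝ) ^ (((12:ℝ))⁻¹) := h2
    _ = (2:ℝ) ^ ((1:ℝ)/12) := by norm_num

lemma key (m : ℕ) (hm : 35 ≤ m) :
    fterm 2 ((2:ℝ)^(m+1)) + fterm (m+1) ((2:ℝ)^(m+1)) ≤ fterm 2 ((2:ℝ)^m) := by
  rw [fterm_pow, fterm_pow, fterm_pow]
  push_cast
  have hM35 : (35:ℝ) ≤ (m:ℝ) := by exact_mod_cast hm
  set M : ℝ := (m:ℝ)
  have hM1 : (0:ℝ) < M + 1 := by linarith
  have e1 : (M+1) * ((1:ℝ)/3 - 1/(2*2)) = (M+1) * (1/12) := by ring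
  have e2 : (M+1) * ((1:ℝ)/3 - 1/(2*(M+1))) = (M+1)/3 - 1/2 := by
    field_simp
  have e3 : M * ((1:ℝ)/3 - 1/(2*2)) = M * (1/12) := by ring
  rw [e1, e2, e3]
  set u : ℝ := (2:ℝ) ^ ((M+1) * (1/12)) with hu'
  set v : ℝ := (2:ℝ) ^ ((M+1)/3 - 1/2) with hv'
  set w : ℝ := (2:ℝ) ^ (M * (1/12)) with hw'
  set t : ℝ := (2:ℝ) ^ ((1:ℝ)/12) with ht'
  have hup : 0 < u := Real.rpow_pos_of_pos two_pos _
  have hvp : 0 < v := Real.rpow_pos_of_pos two_pos _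
  have hwp : 0 < w := Real.rpow_pos_of_pos two_pos _
  have htp : 0 < t := Real.rpow_pos_of_pos two_pos _
  have ht : (1.059:ℝ) ≤ t := twelfth_root
  have h1 : u = t * w := by
    rw [hu', ht', hw', ← Real.rpow_add two_pos]; ring_nf
  have h2 : 256 * u ≤ v := by
    have hv2 : v = u * (2:ℝ) ^ ((M+1)/4 - 1/2) := by
      rw [hv', hu', ← Real.rpow_add two_pos]; ring_nf
    have h256 : (256:ℝ) ≤ (2:ℝ) ^ ((M+1)/4 - 1/2) := by
      have h8' : (2:ℝ) ^ ((8:ℝ)) ≤ (2:ℝ) ^ ((M+1)/4 - 1/2) :=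
        Real.rpow_le_rpow_of_exponent_le one_le_two (by linarith)
      have h8 : (2:ℝ) ^ ((8:ℝ)) = 256 := by
        rw [show ((8:ℝ)) = ((8:ℕ):ℝ) by norm_num, Real.rpow_natCast]; norm_num
      linarith
    calc (256:ℝ) * u ≤ (2:ℝ) ^ ((M+1)/4 - 1/2) * u :=
          mul_le_mul_of_nonneg_right h256 hup.le
      _ = v := by rw [hv2]; ring
  set P : ℝ := (Real.log 2)^2 with hP'
  have hPp : 0 < P := by
    have := Real.log_pos one_lt_two; positivity
  have hπ : 0 < Real.pi := Real.pi_pos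
  have eA : (M+1)^2 * P / (8 * Real.pi * 2^2 * u) = P/(32*Real.pi) * ((M+1)^2/u) := by
    field_simp; ring
  have hM1' : (M+1) ≠ 0 := by positivity
  have hπ' : Real.pi ≠ 0 := ne_of_gt hπ
  have hu0 : u ≠ 0 := ne_of_gt hup
  have hv0 : v ≠ 0 := ne_of_gt hvp
  have hw0 : w ≠ 0 := ne_of_gt hwp
  have eB : (M+1)^2 * P / (8 * Real.pi * (M+1)^2 * v) = P/(32*Real.pi) * (4/v) := by
    field_simp
    ring
  have eC : M^2 * P / (8 * Real.pi * 2^2 * w) = P/(32*Real.pi) * (M^2/w) := by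
    field_simp
    ring
  rw [eA, eB, eC, ← mul_add]
  apply mul_le_mul_of_nonneg_left ?_ (by positivity)
  rw [div_add_div _ _ hu0 hv0, div_le_div_iff₀ (by positivity) (by positivity)]
  have h4 : (1:ℝ)/64 + (M+1)^2 ≤ M^2 * t := by
    have hMt : 1.059 * M^2 ≤ M^2 * t := by nlinarith [sq_nonneg M]
    nlinarith [sq_nonneg (M - 35)]
  have step1 : ((M+1)^2 + 1/64) * (v*w) ≤ M^2*t*(v*w) := by
    apply mul_le_mul_of_nonneg_right (by linarith) (by positivity)
  have step2 : 4*t*w*w ≤ (1/64)*(v*w) := by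
    have := mul_le_mul_of_nonneg_right h2 hwp.le
    rw [h1] at this
    linarith
  rw [h1]
  nlinarith [step1, step2]

lemma stepdown (m : ℕ) (hm : 35 ≤ m) : L ((2:ℝ)^(m+1)) ≤ L ((2:ℝ)^m) := by
  rw [L_eq, L_eq, kappa_pow, kappa_pow, Finset.sum_Icc_succ_top (by omega : 2 ≤ m+1)]
  have hsplit : Finset.Icc 2 m = insert 2 (Finset.Icc 3 m) := by
    ext n; simp; omega
  rw [hsplit, Finset.sum_insert (by simp), Finset.sum_insert (by simp)]
  have hb : (2:ℝ)^(35:ℕ) ≤ (2:ℝ)^m := pow_le_pow_right₀ one_le_two hm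
  have hab : (2:ℝ)^m ≤ (2:ℝ)^(m+1) := pow_le_pow_right₀ one_le_two (Nat.le_succ m)
  have hsum : ∑ k ∈ Finset.Icc 3 m, fterm k ((2:ℝ)^(m+1)) ≤
      ∑ k ∈ Finset.Icc 3 m, fterm k ((2:ℝ)^m) := by
    apply Finset.sum_le_sum
    intro k hk
    simp only [Finset.mem_Icc] at hk
    exact fterm_anti (by omega) hb hab
  have hkey := key m hm
  linarith

lemma chain (j : ℕ) (hj : 35 ≤ j) : ∀ n : ℕ, L ((2:ℝ)^(j+n)) ≤ L ((2:ℝ)^j)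
  | 0 => le_refl _
  | (n+1) => by
      have h1 : L ((2:ℝ)^(j+n+1)) ≤ L ((2:ℝ)^(j+n)) := stepdown (j+n) (by omega)
      have h2 := chain j hj n
      calc L ((2:ℝ)^(j+(n+1))) = L ((2:ℝ)^(j+n+1)) := by ring_nf
        _ ≤ L ((2:ℝ)^(j+n)) := h1
        _ ≤ L ((2:ℝ)^j) := h2

lemma loc {x : ℝ} (hx : (2:ℝ)^(35:ℕ) ≤ x) : L x ≤ L ((2:ℝ)^(kappa x)) := by
  have h4 : (4:ℝ) ≤ x := le_trans (by norm_num) hx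
  have hm : 35 ≤ kappa x := le_kappa hx
  rw [L_eq, L_eq, kappa_pow]
  apply Finset.sum_le_sum
  intro k hk
  simp only [Finset.mem_Icc] at hk
  exact fterm_anti hk.1 (pow_le_pow_right₀ one_le_two hm) (pow_kappa_le h4)

theorem L_le (j : ℕ) (hj : 35 ≤ j) (x : ℝ) (hx : (2 : ℝ) ^ j ≤ x) : L x ≤ L ((2 : ℝ) ^ j) := by
  have hx35 : (2:ℝ)^(35:ℕ) ≤ x := le_trans (pow_le_pow_right₀ one_le_two hj) hx
  have h1 : L x ≤ L ((2:ℝ)^(kappa x)) := loc hx35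
  have hjk : j ≤ kappa x := le_kappa hx
  obtain ⟨n, hn⟩ : ∃ n, kappa x = j + n := ⟨kappa x - j, by omega⟩
  rw [hn] at h1
  exact h1.trans (chain j hj n)
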